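/- For every θ ∈ ℝ^d, the gradient of J admits the alternative expression ∇J(θ) = −ΦᵀΞ(T^{(λ)}v_θ − v_θ) + (ΦᵀΞP^{(λ)}Φ)ᵀ x_θ, where x_θ is the unique solution in span{φ(S)} of the linear system ΦᵀΞΦx = ΦᵀΞ(T^{(λ)}v_θ − v_θ). -/

import Mathlib

open Matrix

/-- For every `θ`, the gradient of the projected-Bellman-error objective `J`
admits the alternative expression `∇J(θ) = −ΦᵀΞ(T^{(λ)}v_θ − v_θ) + (ΦᵀΞP^{(λ)}Φ)ᵀ x_θ`,
where `x_θ` is the unique solution in `span{φ(S)}` of `ΦᵀΞΦx = ΦᵀΞ(T^{(λ)}v_θ − v_θ)`. -/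
theorem stmt_2
    (n d : ℕ) (hn : 0 < n) (hd : 0 < d)
    (Φ : Matrix (Fin n) (Fin d) ℝ) (hΦ : Φ ≠ 0)
    (ξ : Fin n → ℝ) (hξ : ∀ i, 0 < ξ i)
    (Ξ : Matrix (Fin n) (Fin n) ℝ) (hΞ : Ξ = Matrix.diagonal ξ)
    (proj : (Fin n → ℝ) → (Fin n → ℝ))
    (hproj_mem : ∀ v : Fin n → ℝ, ∃ θ : Fin d → ℝ, proj v = Φ.mulVec θ)
    (hproj_orth : ∀ (v : Fin n → ℝ) (θ : Fin d → ℝ),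
      Φ.mulVec θ ⬝ᵥ Ξ.mulVec (v - proj v) = 0)
    (P : Matrix (Fin n) (Fin n) ℝ) (r : Fin n → ℝ)
    (T : (Fin n → ℝ) → (Fin n → ℝ)) (hT : ∀ v, T v = r + P.mulVec v)
    (J : EuclideanSpace ℝ (Fin d) → ℝ)
    (hJ : ∀ θ : EuclideanSpace ℝ (Fin d),
      J θ = (1 / 2) * (proj (T (Φ.mulVec θ) - Φ.mulVec θ) ⬝ᵥ
          Ξ.mulVec (proj (T (Φ.mulVec θ) - Φ.mulVec θ)))) :
    ∀ θ : EuclideanSpace ℝ (Fin d),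
      (∃! x : Fin d → ℝ,
        x ∈ Submodule.span ℝ (Set.range (fun i : Fin n => Φ i)) ∧
        (Φᵀ * Ξ * Φ).mulVec x = (Φᵀ * Ξ).mulVec (T (Φ.mulVec θ) - Φ.mulVec θ)) ∧
      (∀ x : Fin d → ℝ,
        x ∈ Submodule.span ℝ (Set.range (fun i : Fin n => Φ i)) →
        (Φᵀ * Ξ * Φ).mulVec x = (Φᵀ * Ξ).mulVec (T (Φ.mulVec θ) - Φ.mulVec θ) →
        HasGradientAt J
          (WithLp.toLp 2 (-((Φᵀ * Ξ).mulVec (T (Φ.mulVec θ) - Φ.mulVec θ)) + (Φᵀ * Ξ * P * Φ)ᵀ.mulVec x))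
          θ) := by
  intro θ
  -- basic facts
  have hΞsym : Ξᵀ = Ξ := by rw [hΞ]; exact Matrix.diagonal_transpose ξ
  have hswap : ∀ a b : Fin n → ℝ, a ⬝ᵥ Ξ.mulVec b = b ⬝ᵥ Ξ.mulVec a := by
    intro a b
    simp only [hΞ, dotProduct, Matrix.mulVec_diagonal]
    apply Finset.sum_congr rfl
    intro i _
    ring
  have hzero : ∀ v : Fin n → ℝ, v ⬝ᵥ Ξ.mulVec v = 0 → v = 0 := by
    intro v hv
    have h0 : ∀ i ∈ Finset.univ, (0:ℝ) ≤ v i * (ξ i * v i) := by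
      intro i _
      have : v i * (ξ i * v i) = ξ i * (v i * v i) := by ring
      rw [this]
      exact mul_nonneg (hξ i).le (mul_self_nonneg _)
    have hv' : ∑ i, v i * (ξ i * v i) = 0 := by
      simpa [hΞ, dotProduct, Matrix.mulVec_diagonal] using hv
    have := (Finset.sum_eq_zero_iff_of_nonneg h0).mp hv'
    funext i
    have hi := this i (Finset.mem_univ i)
    have : ξ i * (v i * v i) = 0 := by rw [← hi]; ring
    have := (mul_eq_zero.mp this).resolve_left (ne_of_gt (hξ i))
    exact mul_self_eq_zero.mp this
  -- transpose/dot juggling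
  have hdotT : ∀ (t : Fin d → ℝ) (c : Fin n → ℝ),
      Φ.mulVec t ⬝ᵥ c = t ⬝ᵥ Φᵀ.mulVec c := by
    intro t c
    rw [dotProduct_comm, Matrix.dotProduct_mulVec, ← Matrix.mulVec_transpose,
      dotProduct_comm]
  -- uniqueness of ξ-orthogonal projections onto the column space
  have huniqCol : ∀ (v u₁ u₂ : Fin n → ℝ),
      (∃ t, u₁ = Φ.mulVec t) → (∃ t, u₂ = Φ.mulVec t) →
      (∀ t, Φ.mulVec t ⬝ᵥ Ξ.mulVec (v - u₁) = 0) →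
      (∀ t, Φ.mulVec t ⬝ᵥ Ξ.mulVec (v - u₂) = 0) → u₁ = u₂ := by
    intro v u₁ u₂ ⟨t₁, ht₁⟩ ⟨t₂, ht₂⟩ h₁ h₂
    have hd' : u₁ - u₂ = Φ.mulVec (t₁ - t₂) := by
      rw [ht₁, ht₂, Matrix.mulVec_sub]
    have key : (u₁ - u₂) ⬝ᵥ Ξ.mulVec (u₁ - u₂) = 0 := by
      have hstep : Φ.mulVec (t₁ - t₂) ⬝ᵥ Ξ.mulVec (u₁ - u₂) = 0 := by
        have hexp : Φ.mulVec (t₁ - t₂) ⬝ᵥ Ξ.mulVec (u₁ - u₂)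
            = Φ.mulVec (t₁ - t₂) ⬝ᵥ Ξ.mulVec (v - u₂)
              - Φ.mulVec (t₁ - t₂) ⬝ᵥ Ξ.mulVec (v - u₁) := by
          rw [← dotProduct_sub, ← Matrix.mulVec_sub]
          congr 2
          abel
        rw [hexp, h₁ (t₁ - t₂), h₂ (t₁ - t₂), sub_zero]
      rw [hd'] at hstep ⊢
      exact hstep
    have := hzero _ key
    exact sub_eq_zero.mp this
  -- the affine form of the Bellman residual
  set M : Matrix (Fin n) (Fin d) ℝ := (P - 1) * Φ with hM
  have hwϑ : ∀ ϑ : Fin d → ℝ, T (Φ.mulVec ϑ) - Φ.mulVec ϑ = r + M.mulVec ϑ := by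
    intro ϑ
    rw [hT, hM, Matrix.sub_mul, Matrix.sub_mulVec, Matrix.one_mul, ← Matrix.mulVec_mulVec,
      add_sub_assoc]
  set w : Fin n → ℝ := T (Φ.mulVec θ) - Φ.mulVec θ with hwdef
  set b : Fin d → ℝ := (Φᵀ * Ξ).mulVec w with hbdef
  -- Φᵀ Ξ (v - proj v) = 0
  have hperpT : ∀ v : Fin n → ℝ, Φᵀ.mulVec (Ξ.mulVec (v - proj v)) = 0 := by
    intro v
    funext j
    have := hproj_orth v (Pi.single j 1)
    rw [hdotT] at this
    simpa [single_dotProduct] using this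
  have hAproj : ∀ v : Fin n → ℝ, Φᵀ.mulVec (Ξ.mulVec (proj v)) = Φᵀ.mulVec (Ξ.mulVec v) := by
    intro v
    have := hperpT v
    rw [Matrix.mulVec_sub, Matrix.mulVec_sub, sub_eq_zero] at this
    exact this.symm
  -- a solution of the normal equations
  obtain ⟨t₀, ht₀⟩ := hproj_mem w
  have ht₀eq : (Φᵀ * Ξ * Φ).mulVec t₀ = b := by
    rw [hbdef, ← Matrix.mulVec_mulVec, ← Matrix.mulVec_mulVec, ← Matrix.mulVec_mulVec, ← ht₀]
    exact hAproj w
  -- span of rows, in pi form and Euclidean form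
  set S : Submodule ℝ (Fin d → ℝ) := Submodule.span ℝ (Set.range (fun i : Fin n => Φ i)) with hS
  set KE : Submodule ℝ (EuclideanSpace ℝ (Fin d)) :=
    Submodule.span ℝ (Set.range (fun i : Fin n => (WithLp.toLp 2 (Φ i) : EuclideanSpace ℝ (Fin d)))) with hKE
  have hKEtoS : ∀ v : EuclideanSpace ℝ (Fin d), v ∈ KE → (v : Fin d → ℝ) ∈ S := by
    intro v hv
    refine Submodule.span_induction ?_ ?_ ?_ ?_ hv
    · rintro y ⟨i, rfl⟩
      exact Submodule.subset_span ⟨i, rfl⟩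
    · exact S.zero_mem
    · intro a b _ _ ha hb; exact S.add_mem ha hb
    · intro c a _ ha; exact S.smul_mem c ha
  have hinnerPi : ∀ (a b : EuclideanSpace ℝ (Fin d)),
      (inner ℝ a b : ℝ) = (a : Fin d → ℝ) ⬝ᵥ (b : Fin d → ℝ) := by
    intro a b
    simp [PiLp.inner_apply, dotProduct, RCLike.inner_apply, mul_comm]
  -- key: a vector in the row span with Φ v = 0 is zero
  have hrowker : ∀ v : Fin d → ℝ, v ∈ S → Φ.mulVec v = 0 → v = 0 := by
    intro v hvS hΦv
    have hdot : ∀ s : Fin d → ℝ, s ∈ S → s ⬝ᵥ v = 0 := by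
      intro s hs
      refine Submodule.span_induction ?_ ?_ ?_ ?_ hs
      · rintro y ⟨i, rfl⟩
        have : Φ i ⬝ᵥ v = Φ.mulVec v i := rfl
        rw [this, hΦv]; rfl
      · simp
      · intro a b _ _ ha hb; rw [add_dotProduct, ha, hb, add_zero]
      · intro c a _ ha; rw [smul_dotProduct, ha, smul_zero]
    have hvv : v ⬝ᵥ v = 0 := hdot v hvS
    funext i
    have h0 : ∀ i ∈ Finset.univ, (0:ℝ) ≤ v i * v i := fun i _ => mul_self_nonneg _
    have := (Finset.sum_eq_zero_iff_of_nonneg h0).mp hvv i (Finset.mem_univ i)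
    exact mul_self_eq_zero.mp this
  have hAker : ∀ v : Fin d → ℝ, (Φᵀ * Ξ * Φ).mulVec v = 0 → Φ.mulVec v = 0 := by
    intro v hv
    apply hzero
    have : v ⬝ᵥ (Φᵀ * Ξ * Φ).mulVec v = Φ.mulVec v ⬝ᵥ Ξ.mulVec (Φ.mulVec v) := by
      rw [← Matrix.mulVec_mulVec, ← Matrix.mulVec_mulVec, ← hdotT]
    rw [← this, hv, dotProduct_zero]
  -- existence of a solution in the span
  have hexists : ∃ x : Fin d → ℝ, x ∈ S ∧ (Φᵀ * Ξ * Φ).mulVec x = b := by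
    set t₀E : EuclideanSpace ℝ (Fin d) := WithLp.toLp 2 t₀
    set xE : EuclideanSpace ℝ (Fin d) := (KE.orthogonalProjectionOnto t₀E : EuclideanSpace ℝ (Fin d))
    have hxmem : (xE : Fin d → ℝ) ∈ S := hKEtoS _ (KE.orthogonalProjectionOnto t₀E).2
    have hzperp : t₀E - xE ∈ KEᗮ := KE.sub_starProjection_mem_orthogonal t₀E
    have hΦz : Φ.mulVec (t₀E - xE) = 0 := by
      funext i
      have hmem : (WithLp.toLp 2 (Φ i) : EuclideanSpace ℝ (Fin d)) ∈ KE := Submodule.subset_span ⟨i, rfl⟩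
      have := (Submodule.mem_orthogonal KE _).mp hzperp _ hmem
      rw [hinnerPi] at this
      exact this
    refine ⟨xE, hxmem, ?_⟩
    have hsub : (Φᵀ * Ξ * Φ).mulVec (t₀E - xE) = 0 := by
      rw [← Matrix.mulVec_mulVec, ← Matrix.mulVec_mulVec, hΦz]
      simp
    have hsub2 : (Φᵀ * Ξ * Φ).mulVec (t₀E - xE)
        = (Φᵀ * Ξ * Φ).mulVec t₀ - (Φᵀ * Ξ * Φ).mulVec xE := Matrix.mulVec_sub _ _ _
    rw [hsub2, ht₀eq, sub_eq_zero] at hsub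
    exact hsub.symm
  -- uniqueness
  have huniq : ∀ x₁ x₂ : Fin d → ℝ, x₁ ∈ S → x₂ ∈ S →
      (Φᵀ * Ξ * Φ).mulVec x₁ = b → (Φᵀ * Ξ * Φ).mulVec x₂ = b → x₁ = x₂ := by
    intro x₁ x₂ h₁ h₂ e₁ e₂
    have hA : (Φᵀ * Ξ * Φ).mulVec (x₁ - x₂) = 0 := by
      rw [Matrix.mulVec_sub, e₁, e₂, sub_self]
    have := hrowker (x₁ - x₂) (S.sub_mem h₁ h₂) (hAker _ hA)
    exact sub_eq_zero.mp this
  obtain ⟨x₀, hx₀S, hx₀eq⟩ := hexists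
  constructor
  · exact ⟨x₀, ⟨hx₀S, hx₀eq⟩, fun y ⟨hyS, hyeq⟩ => huniq y x₀ hyS hx₀S hyeq hx₀eq⟩
  -- gradient part
  intro x hxS hxeq
  -- proj w = Φ x
  have hqx : proj w = Φ.mulVec x := by
    apply huniqCol w
    · exact hproj_mem w
    · exact ⟨x, rfl⟩
    · exact fun t => hproj_orth w t
    · intro t
      rw [hdotT]
      have : Φᵀ.mulVec (Ξ.mulVec (w - Φ.mulVec x)) = 0 := by
        rw [Matrix.mulVec_sub, Matrix.mulVec_sub, Matrix.mulVec_mulVec,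
          Matrix.mulVec_mulVec, Matrix.mulVec_mulVec, hxeq, ← hbdef, sub_self]
      rw [this, dotProduct_zero]
  -- proj is linear
  have projAdd : ∀ a c : Fin n → ℝ, proj (a + c) = proj a + proj c := by
    intro a c
    apply huniqCol (a + c)
    · exact hproj_mem (a + c)
    · obtain ⟨ta, hta⟩ := hproj_mem a
      obtain ⟨tc, htc⟩ := hproj_mem c
      exact ⟨ta + tc, by rw [Matrix.mulVec_add, hta, htc]⟩
    · exact fun t => hproj_orth (a + c) t
    · intro t
      have : a + c - (proj a + proj c) = (a - proj a) + (c - proj c) := by abel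
      rw [this, Matrix.mulVec_add, dotProduct_add, hproj_orth a t, hproj_orth c t,
        add_zero]
  have projSmul : ∀ (s : ℝ) (a : Fin n → ℝ), proj (s • a) = s • proj a := by
    intro s a
    apply huniqCol (s • a)
    · exact hproj_mem (s • a)
    · obtain ⟨ta, hta⟩ := hproj_mem a
      exact ⟨s • ta, by rw [Matrix.mulVec_smul, hta]⟩
    · exact fun t => hproj_orth (s • a) t
    · intro t
      have : s • a - s • proj a = s • (a - proj a) := (smul_sub s a (proj a)).symm
      rw [this, Matrix.mulVec_smul, dotProduct_smul, hproj_orth a t, smul_zero]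
  set g : (Fin n → ℝ) →ₗ[ℝ] (Fin n → ℝ) :=
    { toFun := proj
      map_add' := projAdd
      map_smul' := projSmul } with hg
  set Pr : Matrix (Fin n) (Fin n) ℝ := LinearMap.toMatrix' g with hPrdef
  have hPr : ∀ v : Fin n → ℝ, Pr.mulVec v = proj v := by
    intro v
    rw [hPrdef, ← Matrix.toLin'_apply, Matrix.toLin'_toMatrix']
    rfl
  set K : Matrix (Fin n) (Fin d) ℝ := Pr * M with hK
  set c0 : Fin n → ℝ := Pr.mulVec r with hc0
  have hq' : ∀ ϑ : Fin d → ℝ, proj (T (Φ.mulVec ϑ) - Φ.mulVec ϑ) = c0 + K.mulVec ϑ := by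
    intro ϑ
    rw [hwϑ, ← hPr, Matrix.mulVec_add, Matrix.mulVec_mulVec, ← hc0, ← hK]
  -- the objective in closed quadratic form
  have hJ' : ∀ ϑ : EuclideanSpace ℝ (Fin d),
      J ϑ = (1 / 2) * ((c0 + K.mulVec ϑ) ⬝ᵥ Ξ.mulVec (c0 + K.mulVec ϑ)) := by
    intro ϑ
    rw [hJ, hq']
  -- continuous linear maps
  set A1 : EuclideanSpace ℝ (Fin d) →L[ℝ] EuclideanSpace ℝ (Fin n) :=
    LinearMap.toContinuousLinearMap
      (((PiLp.continuousLinearEquiv 2 ℝ (fun _ : Fin n => ℝ)).symm.toLinearEquiv.toLinearMap.comp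
        K.mulVecLin).comp
        (PiLp.continuousLinearEquiv 2 ℝ (fun _ : Fin d => ℝ)).toLinearEquiv.toLinearMap) with hA1
  set A2 : EuclideanSpace ℝ (Fin d) →L[ℝ] EuclideanSpace ℝ (Fin n) :=
    LinearMap.toContinuousLinearMap
      (((PiLp.continuousLinearEquiv 2 ℝ (fun _ : Fin n => ℝ)).symm.toLinearEquiv.toLinearMap.comp
        (Ξ * K).mulVecLin).comp
        (PiLp.continuousLinearEquiv 2 ℝ (fun _ : Fin d => ℝ)).toLinearEquiv.toLinearMap) with hA2
  have hA1app : ∀ h : EuclideanSpace ℝ (Fin d), (A1 h : Fin n → ℝ) = K.mulVec h := fun _ => rfl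
  have hA2app : ∀ h : EuclideanSpace ℝ (Fin d), (A2 h : Fin n → ℝ) = (Ξ * K).mulVec h :=
    fun _ => rfl
  set u : EuclideanSpace ℝ (Fin d) → EuclideanSpace ℝ (Fin n) :=
    fun ϑ => WithLp.toLp 2 (c0 + K.mulVec ϑ) with hu
  set v : EuclideanSpace ℝ (Fin d) → EuclideanSpace ℝ (Fin n) :=
    fun ϑ => WithLp.toLp 2 (Ξ.mulVec c0 + (Ξ * K).mulVec ϑ) with hv
  have hud : HasFDerivAt u A1 θ := by
    have : u = fun ϑ => WithLp.toLp 2 c0 + A1 ϑ := rfl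
    rw [this]
    exact (A1.hasFDerivAt).const_add _
  have hvd : HasFDerivAt v A2 θ := by
    have : v = fun ϑ => WithLp.toLp 2 (Ξ.mulVec c0) + A2 ϑ := rfl
    rw [this]
    exact (A2.hasFDerivAt).const_add _
  have hinnerPin : ∀ (a b : EuclideanSpace ℝ (Fin n)),
      (inner ℝ a b : ℝ) = (a : Fin n → ℝ) ⬝ᵥ (b : Fin n → ℝ) := by
    intro a b
    simp [PiLp.inner_apply, dotProduct, RCLike.inner_apply, mul_comm]
  have hJeq : J = fun ϑ => (1 / 2) * (inner ℝ (u ϑ) (v ϑ) : ℝ) := by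
    funext ϑ
    rw [hJ' ϑ, hinnerPin]
    congr 1
    show (c0 + K.mulVec ϑ) ⬝ᵥ Ξ.mulVec (c0 + K.mulVec ϑ)
        = (c0 + K.mulVec ϑ) ⬝ᵥ (Ξ.mulVec c0 + (Ξ * K).mulVec ϑ)
    rw [Matrix.mulVec_add, Matrix.mulVec_mulVec ϑ Ξ K]
  have hJd : HasFDerivAt J
      ((1 / 2 : ℝ) • ((fderivInnerCLM ℝ (u θ, v θ)).comp (A1.prod A2))) θ := by
    rw [hJeq]
    exact (hud.inner ℝ hvd).const_mul (1 / 2)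
  -- the claimed gradient
  set y : Fin d → ℝ := -((Φᵀ * Ξ).mulVec w) + (Φᵀ * Ξ * P * Φ)ᵀ.mulVec x with hy
  -- key algebraic identity: y = Kᵀ Ξ (Φ x)
  have hPrT : Prᵀ.mulVec (Ξ.mulVec (Φ.mulVec x)) = Ξ.mulVec (Φ.mulVec x) := by
    funext j
    have e1 : Prᵀ.mulVec (Ξ.mulVec (Φ.mulVec x)) j
        = Pi.single j 1 ⬝ᵥ Prᵀ.mulVec (Ξ.mulVec (Φ.mulVec x)) := by
      rw [single_dotProduct, one_mul]
    have e2 : Pi.single j 1 ⬝ᵥ Prᵀ.mulVec (Ξ.mulVec (Φ.mulVec x))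
        = Pr.mulVec (Pi.single j 1) ⬝ᵥ Ξ.mulVec (Φ.mulVec x) := by
      rw [Matrix.dotProduct_mulVec, Matrix.vecMul_transpose]
    have e3 : Pr.mulVec (Pi.single j 1) ⬝ᵥ Ξ.mulVec (Φ.mulVec x)
        = Φ.mulVec x ⬝ᵥ Ξ.mulVec (proj (Pi.single j 1)) := by
      rw [hPr, hswap]
    have e4 : Φ.mulVec x ⬝ᵥ Ξ.mulVec (proj (Pi.single j 1))
        = Φ.mulVec x ⬝ᵥ Ξ.mulVec (Pi.single j 1) := by
      have horth := hproj_orth (Pi.single j 1) x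
      rw [Matrix.mulVec_sub, dotProduct_sub, sub_eq_zero] at horth
      exact horth.symm
    have e5 : Φ.mulVec x ⬝ᵥ Ξ.mulVec (Pi.single j 1)
        = Ξ.mulVec (Φ.mulVec x) j := by
      rw [hswap, single_dotProduct, one_mul]
    rw [e1, e2, e3, e4, e5]
  have hmatid : Mᵀ * Ξ * Φ = (Φᵀ * Ξ * P * Φ)ᵀ - Φᵀ * Ξ * Φ := by
    rw [hM]
    simp only [Matrix.transpose_mul, Matrix.transpose_sub, Matrix.transpose_one,
      Matrix.transpose_transpose, hΞsym, Matrix.sub_mul, Matrix.mul_sub, Matrix.one_mul,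
      Matrix.mul_one, Matrix.mul_assoc]
  have hyK : Kᵀ.mulVec (Ξ.mulVec (Φ.mulVec x)) = y := by
    calc Kᵀ.mulVec (Ξ.mulVec (Φ.mulVec x))
        = (Mᵀ * Prᵀ).mulVec (Ξ.mulVec (Φ.mulVec x)) := by rw [hK, Matrix.transpose_mul]
      _ = Mᵀ.mulVec (Prᵀ.mulVec (Ξ.mulVec (Φ.mulVec x))) :=
          (Matrix.mulVec_mulVec _ Mᵀ Prᵀ).symm
      _ = Mᵀ.mulVec (Ξ.mulVec (Φ.mulVec x)) := by rw [hPrT]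
      _ = (Mᵀ * Ξ * Φ).mulVec x := by
          rw [Matrix.mulVec_mulVec, Matrix.mulVec_mulVec]
      _ = (Φᵀ * Ξ * P * Φ)ᵀ.mulVec x - (Φᵀ * Ξ * Φ).mulVec x := by
          rw [hmatid, Matrix.sub_mulVec]
      _ = y := by rw [hy, hxeq]; abel
  -- identify the Fréchet derivative with the inner product against y
  rw [hasGradientAt_iff_hasFDerivAt]
  refine hJd.congr_fderiv ?_
  refine (ContinuousLinearMap.ext fun h => ?_).symm
  rw [InnerProductSpace.toDual_apply_apply, hinnerPi]
  have happ : ((1 / 2 : ℝ) • ((fderivInnerCLM ℝ (u θ, v θ)).comp (A1.prod A2))) h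
      = (1 / 2) * ((inner ℝ (u θ) (A2 h) : ℝ) + inner ℝ (A1 h) (v θ)) := by
    simp [fderivInnerCLM_apply]
  rw [happ, hinnerPin, hinnerPin, hA1app, hA2app]
  have huθ : (u θ : Fin n → ℝ) = Φ.mulVec x := by
    rw [hu]
    show c0 + K.mulVec θ = Φ.mulVec x
    rw [← hqx, ← hq' θ]
  have hvθ : (v θ : Fin n → ℝ) = Ξ.mulVec (Φ.mulVec x) := by
    rw [hv]
    show Ξ.mulVec c0 + (Ξ * K).mulVec θ = Ξ.mulVec (Φ.mulVec x)
    rw [← Matrix.mulVec_mulVec, ← Matrix.mulVec_add, ← hqx, ← hq' θ]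
  rw [huθ, hvθ]
  have t1 : Φ.mulVec x ⬝ᵥ (Ξ * K).mulVec h = K.mulVec h ⬝ᵥ Ξ.mulVec (Φ.mulVec x) := by
    rw [← Matrix.mulVec_mulVec, hswap]
  have t2 : K.mulVec h ⬝ᵥ Ξ.mulVec (Φ.mulVec x)
      = (h : Fin d → ℝ) ⬝ᵥ Kᵀ.mulVec (Ξ.mulVec (Φ.mulVec x)) := by
    rw [Matrix.mulVec_transpose, dotProduct_comm, Matrix.dotProduct_mulVec,
      dotProduct_comm]
  rw [t1, t2, hyK]
  rw [dotProduct_comm]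
  ring
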